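/- Let G be a (δ−2)-fault Hamiltonian graph with minimum degree δ ≥ 3 such that α(G) ≤ ⌈(|G|+1)/2⌉ − δ. Then for every set F of vertices and/or edges of G with |F| = δ−1, the graph G − F has a fractional perfect matching; consequently fsmp(G) = fmp(G) = δ. -/

import Mathlib

open scoped Classical

/-- A fractional perfect matching of `G`: a weight function on edges with values in
`[0,1]`, vanishing off the edge set, whose weights around each vertex sum to `1`. -/
def HasFPM {V : Type*} [Fintype V] (G : SimpleGraph V) : Prop :=
  ∃ f : Sym2 V → ℝ, (∀ e, 0 ≤ f e ∧ f e ≤ 1) ∧ (∀ e, e ∉ G.edgeSet → f e = 0) ∧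
    ∀ v : V, (∑ e : Sym2 V, if v ∈ e then f e else 0) = 1
/-- The graph obtained from `G` by deleting the vertices in `Fv` and the edges in `Fe`. -/
def delFault {V : Type*} (G : SimpleGraph V) (Fv : Finset V) (Fe : Finset (Sym2 V)) :
    SimpleGraph {v : V // v ∈ ({v : V | v ∉ Fv} : Set V)} :=
  (G.deleteEdges ↑Fe).induce {v : V | v ∉ Fv}

/-- The fractional strong matching preclusion number: the minimum total number of vertices
and edges whose deletion leaves a graph with no fractional perfect matching. -/
noncomputable def fsmp {V : Type*} [Fintype V] (G : SimpleGraph V) : ℕ :=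
  sInf {n | ∃ (Fv : Finset V) (Fe : Finset (Sym2 V)), ↑Fe ⊆ G.edgeSet ∧
    Fv.card + Fe.card = n ∧ ¬ HasFPM (delFault G Fv Fe)}
/-- `G` is `f`-fault Hamiltonian: removing any set of at most `f` vertices and/or edges
leaves a Hamiltonian graph. -/
def FaultHam {V : Type*} [Fintype V] (G : SimpleGraph V) (f : ℕ) : Prop :=
  ∀ (Fv : Finset V) (Fe : Finset (Sym2 V)), ↑Fe ⊆ G.edgeSet →
    Fv.card + Fe.card ≤ f → (delFault G Fv Fe).IsHamiltonian
/-- The independence number of a graph. -/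
noncomputable def indepNum {V : Type*} (G : SimpleGraph V) : ℕ :=
  sSup {n | ∃ s : Finset V, s.card = n ∧ ∀ a ∈ s, ∀ b ∈ s, ¬ G.Adj a b}

/-- The fractional matching preclusion number. -/
noncomputable def fmp {V : Type*} [Fintype V] (G : SimpleGraph V) : ℕ :=
  sInf {n | ∃ Fe : Finset (Sym2 V), ↑Fe ⊆ G.edgeSet ∧ Fe.card = n ∧
    ¬ HasFPM (G.deleteEdges ↑Fe)}

lemma fpm_of_inj {W : Type*} [Fintype W] (H : SimpleGraph W) (π : W → W)
    (hinj : Function.Injective π) (hadj : ∀ w, H.Adj w (π w)) : HasFPM H := by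
  classical
  have hbij : Function.Bijective π := Finite.injective_iff_bijective.mp hinj
  set ε := Equiv.ofBijective π hbij with hε
  have hπε : ∀ u, π u = ε u := fun u => rfl
  refine ⟨fun e => ((Finset.univ.filter (fun v => e = s(v, π v))).card : ℝ) / 2, ?_, ?_, ?_⟩
  · intro e
    constructor
    · positivity
    · rw [div_le_one (by norm_num)]
      have h2 : (Finset.univ.filter (fun v => e = s(v, π v))).card ≤ 2 := by
        induction e using Sym2.ind with
        | _ x y =>
          refine le_trans (Finset.card_le_card (t := {x, y}) ?_) (Finset.card_insert_le _ _ |>.trans (by simp))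
          intro v hv
          simp only [Finset.mem_filter] at hv
          have : v ∈ s(x, y) := hv.2 ▸ Sym2.mem_mk_left v (π v)
          simpa [Finset.mem_insert] using Sym2.mem_iff.mp this
      exact_mod_cast (by exact_mod_cast Nat.cast_le.mpr h2 : ((Finset.univ.filter (fun v => e = s(v, π v))).card : ℝ) ≤ 2)
  · intro e he
    have : Finset.univ.filter (fun v => e = s(v, π v)) = ∅ := by
      ext v
      simp only [Finset.mem_filter, Finset.mem_univ, true_and, Finset.notMem_empty, iff_false]
      intro h
      exact he (h ▸ (H.mem_edgeSet.mpr (hadj v)))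
    simp [this]
  · intro v
    have step0 : ∀ e : Sym2 W, (if v ∈ e then ((Finset.univ.filter (fun u => e = s(u, π u))).card : ℝ) / 2 else 0)
        = (if v ∈ e then ((Finset.univ.filter (fun u => e = s(u, π u))).card : ℝ) else 0) / 2 := by
      intro e; split_ifs <;> simp
    simp only [step0]
    rw [← Finset.sum_div]
    rw [show (1:ℝ) = 2/2 by norm_num]
    congr 1
    have step1 : ∀ e : Sym2 W, (if v ∈ e then ((Finset.univ.filter (fun u => e = s(u, π u))).card : ℝ) else 0)
        = ∑ u : W, (if e = s(u, π u) then (if v ∈ e then (1:ℝ) else 0) else 0) := by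
      intro e
      by_cases hv : v ∈ e
      · simp only [hv, if_true]
        rw [Finset.card_filter]
        push_cast
        exact Finset.sum_congr rfl (fun u _ => by by_cases h : e = s(u, π u) <;> simp [h])
      · simp [hv]
    rw [Finset.sum_congr rfl (fun e _ => step1 e)]
    rw [Finset.sum_comm]
    have step2 : ∀ u : W, (∑ e : Sym2 W, if e = s(u, π u) then (if v ∈ e then (1:ℝ) else 0) else 0)
        = (if v ∈ s(u, π u) then (1:ℝ) else 0) := by
      intro u
      rw [Finset.sum_ite_eq' Finset.univ (s(u, π u)) (fun e => if v ∈ e then (1:ℝ) else 0)]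
      simp
    rw [Finset.sum_congr rfl (fun u _ => step2 u)]
    have : ∀ u : W, v ∈ s(u, π u) ↔ u ∈ ({v, ε.symm v} : Finset W) := by
      intro u
      rw [Sym2.mem_iff]
      constructor
      · rintro (rfl | h)
        · simp
        · refine Finset.mem_insert.mpr (Or.inr ?_)
          rw [Finset.mem_singleton]
          subst h
          rw [hπε, Equiv.symm_apply_apply]
      · intro h
        rcases Finset.mem_insert.mp h with rfl | h
        · left; rfl
        · right
          rw [Finset.mem_singleton] at h
          subst h
          rw [hπε, Equiv.apply_symm_apply]
    rw [Finset.sum_congr rfl (fun u _ => by rw [if_congr (this u) rfl rfl])]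
    rw [Finset.sum_ite_mem, Finset.univ_inter, Finset.sum_const]
    have hne : ε.symm v ≠ v := by
      intro h
      have h2 := hadj v
      have h3 : π v = v := by conv_lhs => rw [← h, hπε, Equiv.apply_symm_apply]
      rw [h3] at h2
      exact H.loopless.irrefl v h2
    rw [Finset.card_pair (Ne.symm hne)]
    norm_num

lemma core {V : Type*} [Fintype V] (G : SimpleGraph V) (Fv : Finset V) (Fe : Finset (Sym2 V))
    (M : ℕ) (q : ℕ → V)
    (h1 : ∀ i, i < M → q i ∉ Fv)
    (h2 : ∀ x : V, x ∉ Fv → ∃ i, i < M ∧ q i = x)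
    (h3 : ∀ i j, i < M → j < M → q i = q j → i = j)
    (h4 : ∀ i, i + 1 < M → (G.deleteEdges ↑Fe).Adj (q i) (q (i+1)))
    (h5 : M % 2 = 0 ∨ ∃ a b, a < b ∧ b < M ∧ a % 2 = 0 ∧ b % 2 = 0 ∧
      (G.deleteEdges ↑Fe).Adj (q a) (q b)) :
    HasFPM (delFault G Fv Fe) := by
  classical
  obtain ⟨σ, hlt, hinj, hadj⟩ :
      ∃ σ : ℕ → ℕ, (∀ i, i < M → σ i < M) ∧ (∀ i j, i < M → j < M → σ i = σ j → i = j) ∧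
        (∀ i, i < M → (G.deleteEdges ↑Fe).Adj (q i) (q (σ i))) := by
    by_cases hM : M % 2 = 0
    · refine ⟨fun i => if i % 2 = 0 then i + 1 else i - 1, ?_, ?_, ?_⟩
      · intro i hi; beta_reduce; split_ifs <;> omega
      · intro i j hi hj hij
        simp only at hij
        split_ifs at hij <;> omega
      · intro i hi
        by_cases hp : i % 2 = 0
        · have hlt2 : i + 1 < M := by omega
          simpa only [if_pos hp] using h4 i hlt2
        · have h0 : i - 1 + 1 = i := by omega
          have := (h4 (i-1) (by omega)).symm
          rw [h0] at this
          simpa only [if_neg hp] using this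
    · obtain ⟨a, b, hab, hbM, ha2, hb2, hchord⟩ := h5.resolve_left hM
      refine ⟨fun i => if i < a then (if i % 2 = 0 then i + 1 else i - 1)
        else if i < b then i + 1 else if i = b then a else
          if i % 2 = 1 then i + 1 else i - 1, ?_, ?_, ?_⟩
      · intro i hi; beta_reduce; split_ifs <;> omega
      · intro i j hi hj hij
        simp only at hij
        split_ifs at hij <;> omega
      · intro i hi
        by_cases hia : i < a
        · by_cases hp : i % 2 = 0
          · have hlt2 : i + 1 < M := by omega
            simpa only [if_pos hia, if_pos hp] using h4 i hlt2
          · have h0 : i - 1 + 1 = i := by omega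
            have := (h4 (i-1) (by omega)).symm
            rw [h0] at this
            simpa only [if_pos hia, if_neg hp] using this
        · by_cases hib : i < b
          · simpa only [if_neg hia, if_pos hib] using h4 i (by omega)
          · by_cases hieb : i = b
            · subst hieb
              simpa only [if_neg hia, if_neg hib, if_pos rfl, if_true] using hchord.symm
            · by_cases hp : i % 2 = 1
              · have hlt2 : i + 1 < M := by omega
                simpa only [if_neg hia, if_neg hib, if_neg hieb, if_pos hp] using h4 i hlt2
              · have h0 : i - 1 + 1 = i := by omega
                have := (h4 (i-1) (by omega)).symm
                rw [h0] at this
                simpa only [if_neg hia, if_neg hib, if_neg hieb, if_neg hp] using this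
  have hidx : ∀ w : {v : V // v ∈ ({v : V | v ∉ Fv} : Set V)}, ∃ i, i < M ∧ q i = (w : V) :=
    fun w => h2 _ w.2
  let idx : {v : V // v ∈ ({v : V | v ∉ Fv} : Set V)} → ℕ := fun w => Classical.choose (hidx w)
  have idx_lt : ∀ w, idx w < M := fun w => (Classical.choose_spec (hidx w)).1
  have idx_q : ∀ w, q (idx w) = (w : V) := fun w => (Classical.choose_spec (hidx w)).2
  refine fpm_of_inj _ (fun w => ⟨q (σ (idx w)), h1 _ (hlt _ (idx_lt w))⟩) ?_ ?_
  · intro w1 w2 h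
    have hv : q (σ (idx w1)) = q (σ (idx w2)) := congrArg Subtype.val h
    have h2' := h3 _ _ (hlt _ (idx_lt w1)) (hlt _ (idx_lt w2)) hv
    have h3' := hinj _ _ (idx_lt w1) (idx_lt w2) h2'
    have h4' : (w1 : V) = w2 := by rw [← idx_q w1, ← idx_q w2, h3']
    exact Subtype.ext h4'
  · intro w
    have := hadj (idx w) (idx_lt w)
    rw [idx_q w] at this
    exact this


lemma cyc_of_ham {V : Type*} [Fintype V] (G : SimpleGraph V) (Fv : Finset V) (Fe : Finset (Sym2 V))
    (m : ℕ) (hm : Fintype.card {v : V // v ∈ ({v : V | v ∉ Fv} : Set V)} = m)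
    (hm1 : m ≠ 1) (hham : (delFault G Fv Fe).IsHamiltonian) :
    ∃ c : ℕ → V, 3 ≤ m ∧ (∀ i, c i ∉ Fv) ∧ (∀ x : V, x ∉ Fv → ∃ i, i < m ∧ c i = x) ∧
      (∀ i j, i < m → j < m → c i = c j → i = j) ∧ (∀ i, c i = c (i % m)) ∧
      (∀ i, (G.deleteEdges ↑Fe).Adj (c i) (c (i + 1))) := by
  classical
  obtain ⟨a, p, hp⟩ := hham (by rw [hm]; exact hm1)
  have hnil : ¬ p.Nil := hp.isCycle.not_nil
  set L := p.support.tail with hL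
  have hcover : ∀ w, w ∈ L := by
    intro w
    have := hp.isHamiltonian_tail.mem_support w
    rwa [SimpleGraph.Walk.support_tail_of_not_nil p hnil] at this
  have hnodup : L.Nodup := hp.isCycle.support_nodup
  have hlenm : L.length = m := by
    rw [← hm]
    have h1 : L.toFinset = Finset.univ := by
      ext w; simp [hcover w]
    rw [← List.toFinset_card_of_nodup hnodup, h1, Finset.card_univ]
  have h3m : 3 ≤ m := by
    have h2 := hp.isCycle.three_le_length
    have h3 : L.length = p.length := by
      rw [hL, List.length_tail, SimpleGraph.Walk.length_support]
      omega
    omega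
  have hmpos : 0 < m := by omega
  have hchain : List.Chain' (delFault G Fv Fe).Adj (a :: L) := by
    have := p.isChain_adj_support
    rw [← SimpleGraph.Walk.cons_support_tail hnil] at this
    rwa [SimpleGraph.Walk.support_tail_of_not_nil p hnil] at this
  have hLne : L ≠ [] := by
    intro h; rw [h] at hlenm; simp at hlenm; omega
  have hlast : L.getLast hLne = a := by
    rw [List.getLast_tail]
    exact p.getLast_support
  have hidx : ∀ i, i % m < L.length := fun i => by rw [hlenm]; exact Nat.mod_lt _ hmpos
  refine ⟨fun i => (L.get ⟨i % m, hidx i⟩ : {v : V // v ∈ ({v : V | v ∉ Fv} : Set V)}).val,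
    h3m, ?_, ?_, ?_, ?_, ?_⟩
  · intro i; exact (L.get ⟨i % m, hidx i⟩).2
  · intro x hx
    have hw : (⟨x, hx⟩ : {v : V // v ∈ ({v : V | v ∉ Fv} : Set V)}) ∈ L := hcover _
    obtain ⟨n, hn⟩ := List.mem_iff_get.mp hw
    refine ⟨n.1, by rw [← hlenm]; exact n.2, ?_⟩
    have he : (⟨n.1 % m, hidx n.1⟩ : Fin L.length) = n := by
      apply Fin.ext
      simp only
      exact Nat.mod_eq_of_lt (by rw [← hlenm]; exact n.2)
    beta_reduce
    rw [he, hn]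
  · intro i j hi hj hij
    have hg : L.get ⟨i % m, hidx i⟩ = L.get ⟨j % m, hidx j⟩ := Subtype.ext hij
    have hfin := (List.Nodup.get_inj_iff hnodup).mp hg
    have hval : i % m = j % m := congrArg Fin.val hfin
    rw [Nat.mod_eq_of_lt hi, Nat.mod_eq_of_lt hj] at hval
    exact hval
  · intro i
    have h0 : i % m % m = i % m := Nat.mod_mod_of_dvd i dvd_rfl
    beta_reduce
    simp only [h0]
  · intro i
    set r := i % m with hr
    have hrm : r < m := by rw [hr]; exact Nat.mod_lt _ hmpos
    by_cases hcase : r + 1 < m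
    · have h5 : (i + 1) % m = r + 1 := by
        rw [Nat.add_mod, Nat.mod_eq_of_lt (show 1 < m by omega), ← hr, Nat.mod_eq_of_lt hcase]
      have hchainL : List.Chain' (delFault G Fv Fe).Adj L := hchain.tail
      have hA := List.isChain_iff_getElem.mp hchainL r (by omega)
      simp only [h5]
      exact hA
    · have h5 : (i + 1) % m = 0 := by
        rw [Nat.add_mod, Nat.mod_eq_of_lt (show 1 < m by omega), ← hr]
        have he1 : r + 1 = m := by omega
        rw [he1, Nat.mod_self]
      have hre : r = m - 1 := by omega
      have hA := List.isChain_iff_getElem.mp hchain 0 (by simp only [List.length_cons]; omega)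
      have hfin : (⟨r, hidx i⟩ : Fin L.length) = ⟨L.length - 1, by omega⟩ := Fin.ext (by simp only; omega)
      have hg : L.get ⟨L.length - 1, by omega⟩ = a := by
        rw [List.get_eq_getElem, ← List.getLast_eq_getElem hLne]
        exact hlast
      simp only [h5, ← hr, hfin, hg]
      exact hA

lemma indep_le {V : Type*} [Fintype V] (G : SimpleGraph V) (s : Finset V)
    (hs : ∀ a ∈ s, ∀ b ∈ s, ¬ G.Adj a b) : s.card ≤ indepNum G := by
  apply le_csSup
  · refine ⟨Fintype.card V, ?_⟩
    rintro N ⟨t, rfl, -⟩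
    exact (Finset.card_le_univ t).trans (le_of_eq (Finset.card_univ))
  · exact ⟨s, rfl, hs⟩

lemma one_le_indep {V : Type*} [Fintype V] [Nonempty V] (G : SimpleGraph V) :
    1 ≤ indepNum G := by
  have := indep_le G {Classical.arbitrary V} (by
    intro a ha b hb
    rw [Finset.mem_singleton] at ha hb
    subst ha; subst hb
    exact G.loopless.irrefl _)
  simpa using this


lemma no_chord_contra {V : Type*} [Fintype V] (G : SimpleGraph V) (Fe : Finset (Sym2 V))
    (M : ℕ) (q : ℕ → V)
    (h3 : ∀ i j, i < M → j < M → q i = q j → i = j)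
    (hnochord : ∀ a b, a < b → b < M → a % 2 = 0 → b % 2 = 0 →
      ¬ (G.deleteEdges ↑Fe).Adj (q a) (q b)) :
    (M + 1) / 2 ≤ indepNum G + Fe.card := by
  classical
  set K := (M + 1) / 2 with hK
  have h2i : ∀ i, i < K → 2 * i < M := by intro i hi; omega
  set O : Finset V := (Finset.range K).image (fun i => q (2 * i)) with hO
  have hcardO : O.card = K := by
    rw [hO, Finset.card_image_of_injOn, Finset.card_range]
    intro i hi j hj hij
    simp only [Finset.coe_range, Set.mem_Iio] at hi hj
    have := h3 _ _ (h2i i hi) (h2i j hj) hij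
    omega
  set S : Finset V := Fe.image (fun e => (Quot.out e).1) with hS
  set D := O \ S with hD
  have hind : ∀ a ∈ D, ∀ b ∈ D, ¬ G.Adj a b := by
    intro a ha b hb hadj
    obtain ⟨i, hi, rfl⟩ := Finset.mem_image.mp (Finset.mem_sdiff.mp ha).1
    obtain ⟨j, hj, rfl⟩ := Finset.mem_image.mp (Finset.mem_sdiff.mp hb).1
    rw [Finset.mem_range] at hi hj
    have hne : 2 * i ≠ 2 * j := fun h => hadj.ne (congrArg q h)
    by_cases hFe : s(q (2*i), q (2*j)) ∈ Fe
    · have hout := Sym2.out_fst_mem (s(q (2*i), q (2*j)))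
      rw [Sym2.mem_iff] at hout
      rcases hout with h | h
      · exact (Finset.mem_sdiff.mp ha).2 (Finset.mem_image.mpr ⟨_, hFe, h⟩)
      · exact (Finset.mem_sdiff.mp hb).2 (Finset.mem_image.mpr ⟨_, hFe, h⟩)
    · have hadj' : (G.deleteEdges ↑Fe).Adj (q (2*i)) (q (2*j)) := by
        rw [SimpleGraph.deleteEdges_adj]
        exact ⟨hadj, hFe⟩
      rcases Nat.lt_or_ge (2*i) (2*j) with h | h
      · exact hnochord _ _ h (h2i j hj) (by omega) (by omega) hadj'
      · have hlt : 2 * j < 2 * i := by omega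
        exact hnochord _ _ hlt (h2i i hi) (by omega) (by omega) hadj'.symm
  have hDcard : O.card ≤ D.card + S.card := by
    rw [hD]
    exact Finset.card_le_card_sdiff_add_card
  have hScard : S.card ≤ Fe.card := Finset.card_image_le
  have := indep_le G D hind
  omega


lemma fpm_mono {W : Type*} [Fintype W] {H H' : SimpleGraph W} (h : H ≤ H') :
    HasFPM H → HasFPM H' := by
  rintro ⟨f, hb, hv, hs⟩
  exact ⟨f, hb, fun e he => hv e (fun hee => he (SimpleGraph.edgeSet_mono h hee)), hs⟩


lemma no_fpm_isolated {W : Type*} [Fintype W] (H : SimpleGraph W) (v : W)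
    (h : ∀ w, ¬ H.Adj v w) : ¬ HasFPM H := by
  rintro ⟨f, hb, hs, hsum⟩
  have h0 : (∑ e : Sym2 W, if v ∈ e then f e else 0) = 0 := by
    apply Finset.sum_eq_zero
    intro e _
    by_cases hv : v ∈ e
    · rw [if_pos hv]
      apply hs
      intro hee
      induction e using Sym2.ind with
      | _ x y =>
        rw [SimpleGraph.mem_edgeSet] at hee
        rcases Sym2.mem_iff.mp hv with rfl | rfl
        · exact h _ hee
        · exact h _ hee.symm
    · rw [if_neg hv]
  rw [hsum v] at h0
  norm_num at h0


lemma fpm_transfer_empty {V : Type*} [Fintype V] (G : SimpleGraph V) (Fe : Finset (Sym2 V)) :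
    HasFPM (delFault G (∅ : Finset V) Fe) → HasFPM (G.deleteEdges ↑Fe) := by
  classical
  rintro ⟨f, hb, hv, hs⟩
  set g : V → {v : V // v ∈ ({v : V | v ∉ (∅ : Finset V)} : Set V)} :=
    fun v => ⟨v, by simp⟩ with hg
  have hginj : Function.Injective g := fun a b h => congrArg Subtype.val h
  have hgsurj : Function.Surjective g := fun w => ⟨w.val, Subtype.ext rfl⟩
  have hmapbij : Function.Bijective (Sym2.map g) := by
    constructor
    · intro e1 e2 h
      have : Sym2.map Subtype.val (Sym2.map g e1) = Sym2.map Subtype.val (Sym2.map g e2) := by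
        rw [h]
      rw [Sym2.map_map, Sym2.map_map, show (Subtype.val ∘ g) = id from rfl, Sym2.map_id] at this
      exact this
    · intro e'
      refine ⟨Sym2.map Subtype.val e', ?_⟩
      rw [Sym2.map_map]
      have : (g ∘ Subtype.val) = id := funext (fun w => Subtype.ext rfl)
      rw [this, Sym2.map_id]
      rfl
  have hmem : ∀ (v : V) (e : Sym2 V), v ∈ e ↔ g v ∈ Sym2.map g e := by
    intro v e
    induction e using Sym2.ind with
    | _ x y =>
      rw [Sym2.map_pair_eq, Sym2.mem_iff, Sym2.mem_iff]
      constructor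
      · rintro (rfl | rfl)
        · left; rfl
        · right; rfl
      · rintro (h | h)
        · left; exact hginj h
        · right; exact hginj h
  refine ⟨fun e => f (Sym2.map g e), fun e => hb _, ?_, ?_⟩
  · intro e he
    apply hv
    intro hee
    apply he
    induction e using Sym2.ind with
    | _ x y =>
      rw [Sym2.map_pair_eq, SimpleGraph.mem_edgeSet] at hee
      rw [SimpleGraph.mem_edgeSet]
      exact hee
  · intro v
    rw [← hs (g v)]
    apply Fintype.sum_bijective (Sym2.map g) hmapbij
    intro e
    by_cases hv' : v ∈ e
    · rw [if_pos hv', if_pos ((hmem v e).mp hv')]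
    · rw [if_neg hv', if_neg (fun h => hv' ((hmem v e).mpr h))]

lemma mod_add_cancel {M a i j : ℕ} (hi : i < M) (hj : j < M)
    (h : (a + i) % M = (a + j) % M) : i = j := by
  have h3 : i ≡ j [MOD M] := Nat.ModEq.add_left_cancel' a h
  rwa [Nat.ModEq, Nat.mod_eq_of_lt hi, Nat.mod_eq_of_lt hj] at h3

lemma card_compl_subtype {V : Type*} [Fintype V] (S : Finset V) :
    Fintype.card {v : V // v ∈ ({v : V | v ∉ S} : Set V)} + S.card = Fintype.card V := by
  classical
  have h1 := Fintype.card_subtype_compl (fun v : V => v ∈ S)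
  have h2 : Fintype.card {x : V // x ∈ S} = S.card := Fintype.card_coe S
  have h3 : Fintype.card {v : V // v ∈ ({v : V | v ∉ S} : Set V)}
      = Fintype.card {x : V // ¬ x ∈ S} :=
    Fintype.card_congr (Equiv.subtypeEquivRight (by intro x; simp [Set.mem_setOf_eq]))
  have h4 : S.card ≤ Fintype.card V := (Finset.card_le_univ S).trans_eq Finset.card_univ
  omega


/-- If `G` is a `(δ−2)`-fault Hamiltonian graph with minimum degree `δ ≥ 3` and
`α(G) ≤ ⌈(|G|+1)/2⌉ − δ`, then deleting any `δ−1` vertices and/or edges leaves a graph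
with a fractional perfect matching; consequently `fsmp(G) = fmp(G) = δ`. -/
theorem fsmp_eq_fmp_eq_minDegree {V : Type*} [Fintype V] [Nonempty V] (G : SimpleGraph V)
    (hδ : 3 ≤ G.minDegree) (hham : FaultHam G (G.minDegree - 2))
    (hα : (indepNum G : ℤ) ≤ ((Fintype.card V : ℤ) + 2) / 2 - G.minDegree) :
    (∀ (Fv : Finset V) (Fe : Finset (Sym2 V)), ↑Fe ⊆ G.edgeSet →
        Fv.card + Fe.card = G.minDegree - 1 → HasFPM (delFault G Fv Fe)) ∧
      fsmp G = G.minDegree ∧ fmp G = G.minDegree := by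
  classical
  have hα1 : 1 ≤ indepNum G := one_le_indep G
  have hα2 : 2 * indepNum G + 2 * G.minDegree ≤ Fintype.card V + 2 := by
    have h0 : (indepNum G : ℤ) + G.minDegree ≤ ((Fintype.card V : ℤ) + 2) / 2 := by linarith
    have h2 := (Int.le_ediv_iff_mul_le (by norm_num : (0:ℤ) < 2)).mp h0
    omega
  have hn2δ : 2 * G.minDegree ≤ Fintype.card V := by omega
  have part1 : ∀ (Fv : Finset V) (Fe : Finset (Sym2 V)), ↑Fe ⊆ G.edgeSet →
      Fv.card + Fe.card = G.minDegree - 1 → HasFPM (delFault G Fv Fe) := by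
    intro Fv Fe hFesub hcard
    have hMcalc := card_compl_subtype Fv
    set M := Fintype.card {v : V // v ∈ ({v : V | v ∉ Fv} : Set V)} with hMdef
    have hM4 : G.minDegree + 1 ≤ M := by omega
    have finish : (∀ q : ℕ → V,
        (∀ i, i < M → q i ∉ Fv) →
        (∀ x : V, x ∉ Fv → ∃ i, i < M ∧ q i = x) →
        (∀ i j, i < M → j < M → q i = q j → i = j) →
        (∀ i, i + 1 < M → (G.deleteEdges ↑Fe).Adj (q i) (q (i+1))) →
        HasFPM (delFault G Fv Fe)) := by
      intro q hq1 hq2 hq3 hq4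
      by_cases hpar : M % 2 = 0
      · exact core G Fv Fe M q hq1 hq2 hq3 hq4 (Or.inl hpar)
      · by_cases hch : ∃ a b, a < b ∧ b < M ∧ a % 2 = 0 ∧ b % 2 = 0 ∧
            (G.deleteEdges ↑Fe).Adj (q a) (q b)
        · exact core G Fv Fe M q hq1 hq2 hq3 hq4 (Or.inr hch)
        · exfalso
          push_neg at hch
          have hcle := no_chord_contra G Fe M q hq3 hch
          omega
    by_cases hFeN : Fe.Nonempty
    · -- Case B : un-delete an edge
      obtain ⟨e, he⟩ := hFeN
      have hsub' : ↑(Fe.erase e) ⊆ G.edgeSet :=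
        fun x hx => hFesub (Finset.erase_subset e Fe hx)
      have hFe1 : 1 ≤ Fe.card := Finset.card_pos.mpr ⟨e, he⟩
      have hcard' : Fv.card + (Fe.erase e).card ≤ G.minDegree - 2 := by
        rw [Finset.card_erase_of_mem he]; omega
      obtain ⟨c, h3M, hc1, hc2, hc3, hper, hcadj⟩ :=
        cyc_of_ham G Fv (Fe.erase e) M hMdef.symm (by omega) (hham _ _ hsub' hcard')
      have hMpos : 0 < M := by omega
      have hcinj : ∀ r s, c r = c s → r % M = s % M := by
        intro r s h
        apply hc3 _ _ (Nat.mod_lt _ hMpos) (Nat.mod_lt _ hMpos)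
        rw [← hper r, ← hper s]; exact h
      by_cases hsurv : ∀ i, i < M → s(c i, c (i+1)) ≠ e
      · -- B1: the cycle avoids e
        apply finish c (fun i _ => hc1 i) hc2 hc3
        intro i hi
        have h := hcadj i
        rw [SimpleGraph.deleteEdges_adj] at h ⊢
        refine ⟨h.1, ?_⟩
        intro hmem
        exact h.2 (Finset.mem_coe.mpr (Finset.mem_erase.mpr
          ⟨hsurv i (by omega), Finset.mem_coe.mp hmem⟩))
      · -- B2: the cycle uses e; cutting it gives a Hamiltonian path
        push_neg at hsurv
        obtain ⟨i0, hi0, hie⟩ := hsurv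
        apply finish (fun j => c (i0 + 1 + j))
        · intro i _
          exact hc1 _
        · intro x hx
          obtain ⟨i, hi, hci⟩ := hc2 x hx
          by_cases hii : i0 < i
          · refine ⟨i - i0 - 1, by omega, ?_⟩
            show c (i0 + 1 + (i - i0 - 1)) = x
            rw [show i0 + 1 + (i - i0 - 1) = i by omega]
            exact hci
          · refine ⟨i + M - i0 - 1, by omega, ?_⟩
            show c (i0 + 1 + (i + M - i0 - 1)) = x
            rw [show i0 + 1 + (i + M - i0 - 1) = i + M by omega]
            rw [hper (i + M), Nat.add_mod_right, Nat.mod_eq_of_lt hi]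
            exact hci
        · intro i j hi hj hij
          have h := hcinj _ _ hij
          exact mod_add_cancel hi hj h
        · intro j hj
          show (G.deleteEdges ↑Fe).Adj (c (i0 + 1 + j)) (c (i0 + 1 + (j + 1)))
          have h := hcadj (i0 + 1 + j)
          rw [show i0 + 1 + j + 1 = i0 + 1 + (j + 1) by omega] at h
          rw [SimpleGraph.deleteEdges_adj] at h ⊢
          refine ⟨h.1, ?_⟩
          intro hmem
          by_cases hee : s(c (i0 + 1 + j), c (i0 + 1 + (j + 1))) = e
          · rw [← hie] at hee
            rw [Sym2.eq_iff] at hee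
            rcases hee with ⟨ha, hb⟩ | ⟨ha, hb⟩
            · have h1 := hcinj _ _ ha
              have h2 : (i0 + (1 + j)) % M = (i0 + 0) % M := by
                rw [show i0 + (1 + j) = i0 + 1 + j by omega, show i0 + 0 = i0 by omega]
                exact h1
              have := mod_add_cancel (show 1 + j < M by omega) (by omega) h2
              omega
            · have h1 := hcinj _ _ ha
              have h1' : (i0 + 1 + j) % M = (i0 + 1 + 0) % M := by
                rw [show i0 + 1 + 0 = i0 + 1 by omega]
                exact h1
              have hj0 : j = 0 := mod_add_cancel (by omega) (by omega) h1'
              have h2 := hcinj _ _ hb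
              rw [hj0] at h2
              have h2' : (i0 + 2) % M = (i0 + 0) % M := by
                rw [show i0 + 2 = i0 + 1 + (0 + 1) by omega, show i0 + 0 = i0 by omega]
                exact h2
              have : 2 = 0 := mod_add_cancel (show 2 < M by omega) (by omega)
                (by rw [show i0 + 2 = i0 + 2 by rfl] at h2'; exact h2')
              omega
          · exact h.2 (Finset.mem_coe.mpr (Finset.mem_erase.mpr
              ⟨hee, Finset.mem_coe.mp hmem⟩))
    · -- Case A : Fe = ∅, un-delete a vertex
      have hFe0 : Fe = ∅ := Finset.not_nonempty_iff_eq_empty.mp hFeN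
      have hFecard0 : Fe.card = 0 := by rw [hFe0]; rfl
      have hkpos : 0 < Fv.card := by omega
      obtain ⟨v, hv⟩ := Finset.card_pos.mp hkpos
      have hcard' : (Fv.erase v).card + Fe.card ≤ G.minDegree - 2 := by
        rw [Finset.card_erase_of_mem hv]; omega
      have hM1 : Fintype.card {x : V // x ∈ ({x : V | x ∉ Fv.erase v} : Set V)} = M + 1 := by
        have h1 := card_compl_subtype (Fv.erase v)
        rw [Finset.card_erase_of_mem hv] at h1
        omega
      obtain ⟨c, h3M, hc1, hc2, hc3, hper, hcadj⟩ :=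
        cyc_of_ham G (Fv.erase v) Fe (M + 1) hM1 (by omega) (hham _ _ hFesub hcard')
      have hcinj : ∀ r s, c r = c s → r % (M + 1) = s % (M + 1) := by
        intro r s h
        apply hc3 _ _ (Nat.mod_lt _ (by omega)) (Nat.mod_lt _ (by omega))
        rw [← hper r, ← hper s]; exact h
      obtain ⟨i0, hi0, hci0⟩ := hc2 v (Finset.notMem_erase v Fv)
      apply finish (fun j => c (i0 + 1 + j))
      · intro j hj
        show c (i0 + 1 + j) ∉ Fv
        intro hmem
        by_cases hxv : c (i0 + 1 + j) = v
        · rw [← hci0] at hxv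
          have h1 := hcinj _ _ hxv
          have h2 : (i0 + (1 + j)) % (M + 1) = (i0 + 0) % (M + 1) := by
            rw [show i0 + (1 + j) = i0 + 1 + j by omega, show i0 + 0 = i0 by omega]
            exact h1
          have := mod_add_cancel (show 1 + j < M + 1 by omega) (by omega) h2
          omega
        · exact hc1 _ (Finset.mem_erase.mpr ⟨hxv, hmem⟩)
      · intro x hx
        have hxe : x ∉ Fv.erase v := fun h => hx (Finset.mem_erase.mp h).2
        obtain ⟨i, hi, hci⟩ := hc2 x hxe
        have hii0 : i ≠ i0 := by
          intro h
          rw [h, hci0] at hci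
          exact hx (hci ▸ hv)
        by_cases hgt : i0 < i
        · refine ⟨i - i0 - 1, by omega, ?_⟩
          show c (i0 + 1 + (i - i0 - 1)) = x
          rw [show i0 + 1 + (i - i0 - 1) = i by omega]
          exact hci
        · have hlt : i < i0 := by omega
          refine ⟨i + (M + 1) - i0 - 1, by omega, ?_⟩
          show c (i0 + 1 + (i + (M + 1) - i0 - 1)) = x
          rw [show i0 + 1 + (i + (M + 1) - i0 - 1) = i + (M + 1) by omega]
          rw [hper (i + (M + 1)), Nat.add_mod_right, Nat.mod_eq_of_lt hi]
          exact hci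
      · intro i j hi hj hij
        have h := hcinj _ _ hij
        exact mod_add_cancel (by omega) (by omega) h
      · intro j hj
        show (G.deleteEdges ↑Fe).Adj (c (i0 + 1 + j)) (c (i0 + 1 + (j + 1)))
        have h := hcadj (i0 + 1 + j)
        rw [show i0 + 1 + j + 1 = i0 + 1 + (j + 1) by omega] at h
        exact h
  -- second part: fsmp G = fmp G = minDegree
  obtain ⟨v0, hv0⟩ := G.exists_minimal_degree_vertex
  have hFe0sub : ↑(G.incidenceFinset v0) ⊆ G.edgeSet := by
    intro x hx
    rw [Finset.mem_coe, SimpleGraph.mem_incidenceFinset] at hx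
    exact hx.1
  have hFe0card : (G.incidenceFinset v0).card = G.minDegree := by
    rw [SimpleGraph.card_incidenceFinset_eq_degree]
    exact hv0.symm
  have hiso : ∀ w, ¬ (G.deleteEdges ↑(G.incidenceFinset v0)).Adj v0 w := by
    intro w hadj
    rw [SimpleGraph.deleteEdges_adj] at hadj
    apply hadj.2
    rw [Finset.mem_coe, SimpleGraph.mem_incidenceFinset]
    exact ⟨G.mem_edgeSet.mpr hadj.1, Sym2.mem_mk_left _ _⟩
  have hnofpm1 : ¬ HasFPM (G.deleteEdges ↑(G.incidenceFinset v0)) :=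
    no_fpm_isolated _ v0 hiso
  have hnofpm2 : ¬ HasFPM (delFault G (∅ : Finset V) (G.incidenceFinset v0)) := by
    apply no_fpm_isolated _ (⟨v0, by simp⟩ : {v : V // v ∈ ({v : V | v ∉ (∅ : Finset V)} : Set V)})
    intro w hadj
    exact hiso w.val hadj
  have hEdge : G.minDegree * G.minDegree ≤ G.edgeFinset.card := by
    have hsum := SimpleGraph.sum_degrees_eq_twice_card_edges G
    have hge : Fintype.card V * G.minDegree ≤ ∑ v, G.degree v := by
      have := Finset.card_nsmul_le_sum Finset.univ (fun v => G.degree v) G.minDegree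
        (fun v _ => G.minDegree_le_degree v)
      simpa [smul_eq_mul, Finset.card_univ] using this
    have h1 : 2 * G.minDegree * G.minDegree ≤ Fintype.card V * G.minDegree :=
      Nat.mul_le_mul_right _ hn2δ
    have h2 : Fintype.card V * G.minDegree ≤ 2 * G.edgeFinset.card := by
      rw [← hsum]; exact hge
    have h3 : 2 * (G.minDegree * G.minDegree) ≤ 2 * G.edgeFinset.card := by
      calc 2 * (G.minDegree * G.minDegree) = 2 * G.minDegree * G.minDegree := by ring
        _ ≤ Fintype.card V * G.minDegree := h1
        _ ≤ 2 * G.edgeFinset.card := h2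
    omega
  have hδle : G.minDegree ≤ G.minDegree * G.minDegree :=
    Nat.le_mul_of_pos_left _ (by omega)
  have hfmp : fmp G = G.minDegree := by
    apply le_antisymm
    · exact Nat.sInf_le ⟨G.incidenceFinset v0, hFe0sub, hFe0card, hnofpm1⟩
    · refine le_csInf ⟨G.minDegree, G.incidenceFinset v0, hFe0sub, hFe0card, hnofpm1⟩ ?_
      rintro N ⟨Fe, hsub, rfl, hno⟩
      by_contra hlt
      push_neg at hlt
      have hFeF : Fe ⊆ G.edgeFinset := fun x hx =>
        SimpleGraph.mem_edgeFinset.mpr (hsub hx)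
      obtain ⟨Fe', hsub1, hsub2, hcard'⟩ :=
        Finset.exists_subsuperset_card_eq hFeF (n := G.minDegree - 1) (by omega) (by omega)
      have hfpm := part1 ∅ Fe' (fun x hx => SimpleGraph.mem_edgeFinset.mp (hsub2 hx))
        (by simpa using hcard')
      have h2 := fpm_transfer_empty G Fe' hfpm
      exact hno (fpm_mono (SimpleGraph.deleteEdges_anti (Finset.coe_subset.mpr hsub1)) h2)
  have hfsmp : fsmp G = G.minDegree := by
    apply le_antisymm
    · apply Nat.sInf_le
      exact ⟨∅, G.incidenceFinset v0, hFe0sub, by simp [hFe0card], hnofpm2⟩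
    · refine le_csInf ⟨G.minDegree, ∅, G.incidenceFinset v0, hFe0sub, by simp [hFe0card], hnofpm2⟩ ?_
      rintro N ⟨Fv, Fe, hsub, rfl, hno⟩
      by_contra hlt
      push_neg at hlt
      have hFeF : Fe ⊆ G.edgeFinset := fun x hx =>
        SimpleGraph.mem_edgeFinset.mpr (hsub hx)
      obtain ⟨Fe', hsub1, hsub2, hcard'⟩ :=
        Finset.exists_subsuperset_card_eq hFeF (n := G.minDegree - 1 - Fv.card) (by omega) (by omega)
      have hfpm := part1 Fv Fe' (fun x hx => SimpleGraph.mem_edgeFinset.mp (hsub2 hx))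
        (by omega)
      apply hno
      apply fpm_mono _ hfpm
      intro a b hab
      have hab' : (G.deleteEdges ↑Fe').Adj a.val b.val := hab
      show (G.deleteEdges ↑Fe).Adj a.val b.val
      rw [SimpleGraph.deleteEdges_adj] at hab' ⊢
      exact ⟨hab'.1, fun h => hab'.2 (Finset.coe_subset.mpr hsub1 h)⟩
  exact ⟨part1, hfsmp, hfmp⟩
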